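/- Let β, N₀, κ, ν > 0 and η ≥ 0 be real numbers. For M > 0 define EE_max(M) = sup over z > 0 of log₂(1 + (Mβ/N₀) z) / (z/κ + νM + η·log₂(1 + (Mβ/N₀) z)). Then EE_max(M) > 0 for every M > 0, EE_max(M) → 0 as M → 0⁺, EE_max(M) → 0 as M → ∞, and there exists a finite M* > 0 such that EE_max(M*) ≥ EE_max(M) for all M > 0. -/

import Mathlib

/-- The maximum energy efficiency over the power spectral density `z = P/B`,
as a function of the (real-valued) number of antennas `M`. -/
noncomputable def EEmax (β N₀ κ ν η M : ℝ) : ℝ :=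
  sSup {y : ℝ | ∃ z : ℝ, 0 < z ∧
    y = Real.logb 2 (1 + (M * β / N₀) * z) /
      (z / κ + ν * M + η * Real.logb 2 (1 + (M * β / N₀) * z))}

lemma log_le_four_rpow {x : ℝ} (hx : 0 ≤ x) :
    Real.log (1 + x) ≤ 4 * x ^ ((4:ℝ)⁻¹) := by
  have h1 : (0:ℝ) < 1 + x := by linarith
  have h2 : Real.log (1 + x) = 4 * Real.log ((1 + x) ^ ((4:ℝ)⁻¹)) := by
    rw [Real.log_rpow h1]; ring
  have h3 : Real.log ((1 + x) ^ ((4:ℝ)⁻¹)) ≤ (1 + x) ^ ((4:ℝ)⁻¹) - 1 :=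
    Real.log_le_sub_one_of_pos (Real.rpow_pos_of_pos h1 _)
  have h4 : (1 + x) ^ ((4:ℝ)⁻¹) ≤ 1 + x ^ ((4:ℝ)⁻¹) := by
    set y := x ^ ((4:ℝ)⁻¹) with hy
    have hy0 : 0 ≤ y := Real.rpow_nonneg hx _
    have hx4 : x = y ^ (4:ℕ) := by
      rw [hy, ← Real.rpow_natCast (x ^ ((4:ℝ)⁻¹)) 4, ← Real.rpow_mul hx]
      norm_num
    have h5 : 1 + x ≤ (1 + y) ^ (4:ℕ) := by
      rw [hx4]; nlinarith [sq_nonneg y, sq_nonneg (1 + y), sq_nonneg (y*(1+y))]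
    calc (1 + x) ^ ((4:ℝ)⁻¹) ≤ ((1 + y) ^ (4:ℕ)) ^ ((4:ℝ)⁻¹) :=
          Real.rpow_le_rpow h1.le h5 (by norm_num)
      _ = 1 + y := by
          rw [← Real.rpow_natCast (1 + y) 4, ← Real.rpow_mul (by linarith)]
          norm_num
  linarith

noncomputable def myF (c κ ν η M z : ℝ) : ℝ :=
  Real.logb 2 (1 + c * M * z) /
    (z / κ + ν * M + η * Real.logb 2 (1 + c * M * z))

lemma myF_pos {c κ ν η M z : ℝ} (hc : 0 < c) (hκ : 0 < κ) (hν : 0 < ν)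
    (hη : 0 ≤ η) (hM : 0 < M) (hz : 0 < z) : 0 < myF c κ ν η M z := by
  have hx : 0 < c * M * z := by positivity
  have hg : 0 < Real.logb 2 (1 + c * M * z) := Real.logb_pos one_lt_two (by linarith)
  have hD : 0 < z / κ + ν * M + η * Real.logb 2 (1 + c * M * z) := by positivity
  exact div_pos hg hD

lemma myF_le_linM {c κ ν η M z : ℝ} (hc : 0 < c) (hκ : 0 < κ) (hν : 0 < ν)
    (hη : 0 ≤ η) (hM : 0 < M) (hz : 0 < z) :
    myF c κ ν η M z ≤ (c * κ / Real.log 2) * M := by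
  have hL : 0 < Real.log 2 := Real.log_pos one_lt_two
  have hx : 0 < c * M * z := by positivity
  have hg : 0 < Real.logb 2 (1 + c * M * z) := Real.logb_pos one_lt_two (by linarith)
  have hgle : Real.logb 2 (1 + c * M * z) ≤ c * M * z / Real.log 2 := by
    rw [Real.logb]
    apply div_le_div_of_nonneg_right _ hL.le
    have := Real.log_le_sub_one_of_pos (show (0:ℝ) < 1 + c*M*z by linarith)
    linarith
  have hD : z / κ ≤ z / κ + ν * M + η * Real.logb 2 (1 + c * M * z) := by
    have h1 : 0 ≤ ν * M := by positivity
    have h2 : 0 ≤ η * Real.logb 2 (1 + c * M * z) := mul_nonneg hη hg.le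
    linarith
  calc myF c κ ν η M z ≤ (c * M * z / Real.log 2) / (z / κ) :=
        div_le_div₀ (by positivity) hgle (by positivity) hD
    _ = (c * κ / Real.log 2) * M := by field_simp

lemma myF_le_linZ {c κ ν η M z : ℝ} (hc : 0 < c) (hκ : 0 < κ) (hν : 0 < ν)
    (hη : 0 ≤ η) (hM : 0 < M) (hz : 0 < z) :
    myF c κ ν η M z ≤ (c / (ν * Real.log 2)) * z := by
  have hL : 0 < Real.log 2 := Real.log_pos one_lt_two
  have hx : 0 < c * M * z := by positivity
  have hg : 0 < Real.logb 2 (1 + c * M * z) := Real.logb_pos one_lt_two (by linarith)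
  have hgle : Real.logb 2 (1 + c * M * z) ≤ c * M * z / Real.log 2 := by
    rw [Real.logb]
    apply div_le_div_of_nonneg_right _ hL.le
    have := Real.log_le_sub_one_of_pos (show (0:ℝ) < 1 + c*M*z by linarith)
    linarith
  have hD : ν * M ≤ z / κ + ν * M + η * Real.logb 2 (1 + c * M * z) := by
    have h1 : 0 ≤ z / κ := by positivity
    have h2 : 0 ≤ η * Real.logb 2 (1 + c * M * z) := mul_nonneg hη hg.le
    linarith
  calc myF c κ ν η M z ≤ (c * M * z / Real.log 2) / (ν * M) :=
        div_le_div₀ (by positivity) hgle (by positivity) hD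
    _ = (c / (ν * Real.log 2)) * z := by field_simp

lemma myF_le_sqrtM {c κ ν η M z : ℝ} (hc : 0 < c) (hκ : 0 < κ) (hν : 0 < ν)
    (hη : 0 ≤ η) (hM : 0 < M) (hz : 0 < z) :
    myF c κ ν η M z ≤
      (4 * c ^ ((4:ℝ)⁻¹) / (Real.log 2 * (4/κ) ^ ((4:ℝ)⁻¹) * (4*ν/3) ^ ((3:ℝ)/4)))
        / Real.sqrt M := by
  have hL : 0 < Real.log 2 := Real.log_pos one_lt_two
  have hx : 0 < c * M * z := by positivity
  have hg : 0 < Real.logb 2 (1 + c * M * z) := Real.logb_pos one_lt_two (by linarith)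
  have hgle : Real.logb 2 (1 + c * M * z) ≤ 4 * (c*M*z) ^ ((4:ℝ)⁻¹) / Real.log 2 := by
    rw [Real.logb]
    exact div_le_div_of_nonneg_right (log_le_four_rpow hx.le) hL.le
  have hDge : (4/κ*z) ^ ((4:ℝ)⁻¹) * (4*ν/3*M) ^ ((3:ℝ)/4) ≤ z/κ + ν*M := by
    have h := Real.geom_mean_le_arith_mean2_weighted
      (w₁ := (4:ℝ)⁻¹) (w₂ := 3/4) (p₁ := 4/κ*z) (p₂ := 4*ν/3*M)
      (by norm_num) (by norm_num) (by positivity) (by positivity) (by norm_num)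
    calc (4/κ*z) ^ ((4:ℝ)⁻¹) * (4*ν/3*M) ^ ((3:ℝ)/4)
        ≤ (4:ℝ)⁻¹ * (4/κ*z) + 3/4 * (4*ν/3*M) := h
      _ = z/κ + ν*M := by ring
  have hD2 : z/κ + ν*M ≤ z/κ + ν*M + η * Real.logb 2 (1 + c*M*z) :=
    le_add_of_nonneg_right (mul_nonneg hη hg.le)
  have hgeo : 0 < (4/κ*z) ^ ((4:ℝ)⁻¹) * (4*ν/3*M) ^ ((3:ℝ)/4) := by positivity
  have hfle : myF c κ ν η M z ≤
      (4 * (c*M*z) ^ ((4:ℝ)⁻¹) / Real.log 2) /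
        ((4/κ*z) ^ ((4:ℝ)⁻¹) * (4*ν/3*M) ^ ((3:ℝ)/4)) := by
    apply div_le_div₀ (by positivity) hgle hgeo (hDge.trans hD2)
  refine hfle.trans (le_of_eq ?_)
  have eM : M ^ ((3:ℝ)/4) = M ^ ((4:ℝ)⁻¹) * Real.sqrt M := by
    rw [Real.sqrt_eq_rpow, ← Real.rpow_add hM]; norm_num
  have ec : (c*M*z) ^ ((4:ℝ)⁻¹) = c ^ ((4:ℝ)⁻¹) * M ^ ((4:ℝ)⁻¹) * z ^ ((4:ℝ)⁻¹) := by
    rw [Real.mul_rpow (by positivity) hz.le, Real.mul_rpow hc.le hM.le]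
  have ez : (4/κ*z) ^ ((4:ℝ)⁻¹) = (4/κ) ^ ((4:ℝ)⁻¹) * z ^ ((4:ℝ)⁻¹) :=
    Real.mul_rpow (by positivity) hz.le
  have eν : (4*ν/3*M) ^ ((3:ℝ)/4) = (4*ν/3) ^ ((3:ℝ)/4) * M ^ ((3:ℝ)/4) :=
    Real.mul_rpow (by positivity) hM.le
  rw [ec, ez, eν, eM]
  have h1 : Real.sqrt M ≠ 0 := (Real.sqrt_pos.mpr hM).ne'
  have h2 : M ^ ((4:ℝ)⁻¹) ≠ 0 := by positivity
  have h3 : z ^ ((4:ℝ)⁻¹) ≠ 0 := by positivity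
  have h4 : ((4:ℝ)/κ) ^ ((4:ℝ)⁻¹) ≠ 0 := by positivity
  have h5 : ((4:ℝ)*ν/3) ^ ((3:ℝ)/4) ≠ 0 := by positivity
  field_simp

lemma myF_le_sqrtZ {c κ ν η M z : ℝ} (hc : 0 < c) (hκ : 0 < κ) (hν : 0 < ν)
    (hη : 0 ≤ η) (hM : 0 < M) (hz : 0 < z) :
    myF c κ ν η M z ≤
      (4 * c ^ ((4:ℝ)⁻¹) / (Real.log 2 * (4/(3*κ)) ^ ((3:ℝ)/4) * (4*ν) ^ ((4:ℝ)⁻¹)))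
        / Real.sqrt z := by
  have hL : 0 < Real.log 2 := Real.log_pos one_lt_two
  have hx : 0 < c * M * z := by positivity
  have hg : 0 < Real.logb 2 (1 + c * M * z) := Real.logb_pos one_lt_two (by linarith)
  have hgle : Real.logb 2 (1 + c * M * z) ≤ 4 * (c*M*z) ^ ((4:ℝ)⁻¹) / Real.log 2 := by
    rw [Real.logb]
    exact div_le_div_of_nonneg_right (log_le_four_rpow hx.le) hL.le
  have hDge : (4/(3*κ)*z) ^ ((3:ℝ)/4) * (4*ν*M) ^ ((4:ℝ)⁻¹) ≤ z/κ + ν*M := by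
    have h := Real.geom_mean_le_arith_mean2_weighted
      (w₁ := (3:ℝ)/4) (w₂ := (4:ℝ)⁻¹) (p₁ := 4/(3*κ)*z) (p₂ := 4*ν*M)
      (by norm_num) (by norm_num) (by positivity) (by positivity) (by norm_num)
    calc (4/(3*κ)*z) ^ ((3:ℝ)/4) * (4*ν*M) ^ ((4:ℝ)⁻¹)
        ≤ (3:ℝ)/4 * (4/(3*κ)*z) + (4:ℝ)⁻¹ * (4*ν*M) := h
      _ = z/κ + ν*M := by field_simp
  have hD2 : z/κ + ν*M ≤ z/κ + ν*M + η * Real.logb 2 (1 + c*M*z) :=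
    le_add_of_nonneg_right (mul_nonneg hη hg.le)
  have hgeo : 0 < (4/(3*κ)*z) ^ ((3:ℝ)/4) * (4*ν*M) ^ ((4:ℝ)⁻¹) := by positivity
  have hfle : myF c κ ν η M z ≤
      (4 * (c*M*z) ^ ((4:ℝ)⁻¹) / Real.log 2) /
        ((4/(3*κ)*z) ^ ((3:ℝ)/4) * (4*ν*M) ^ ((4:ℝ)⁻¹)) := by
    apply div_le_div₀ (by positivity) hgle hgeo (hDge.trans hD2)
  refine hfle.trans (le_of_eq ?_)
  have eZ : z ^ ((3:ℝ)/4) = z ^ ((4:ℝ)⁻¹) * Real.sqrt z := by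
    rw [Real.sqrt_eq_rpow, ← Real.rpow_add hz]; norm_num
  have ec : (c*M*z) ^ ((4:ℝ)⁻¹) = c ^ ((4:ℝ)⁻¹) * M ^ ((4:ℝ)⁻¹) * z ^ ((4:ℝ)⁻¹) := by
    rw [Real.mul_rpow (by positivity) hz.le, Real.mul_rpow hc.le hM.le]
  have ez : (4/(3*κ)*z) ^ ((3:ℝ)/4) = (4/(3*κ)) ^ ((3:ℝ)/4) * z ^ ((3:ℝ)/4) :=
    Real.mul_rpow (by positivity) hz.le
  have eν : (4*ν*M) ^ ((4:ℝ)⁻¹) = (4*ν) ^ ((4:ℝ)⁻¹) * M ^ ((4:ℝ)⁻¹) :=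
    Real.mul_rpow (by positivity) hM.le
  rw [ec, ez, eν, eZ]
  have h1 : Real.sqrt z ≠ 0 := (Real.sqrt_pos.mpr hz).ne'
  have h2 : M ^ ((4:ℝ)⁻¹) ≠ 0 := by positivity
  have h3 : z ^ ((4:ℝ)⁻¹) ≠ 0 := by positivity
  have h4 : ((4:ℝ)/(3*κ)) ^ ((3:ℝ)/4) ≠ 0 := by positivity
  have h5 : ((4:ℝ)*ν) ^ ((4:ℝ)⁻¹) ≠ 0 := by positivity
  field_simp

/-- `EEmax(M) > 0` for `M > 0`, `EEmax(M) → 0` as `M → 0⁺` and as `M → ∞`, and a finite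
`M* > 0` maximizes `EEmax`. -/
theorem stmt_4 (β N₀ κ ν η : ℝ) (hβ : 0 < β) (hN : 0 < N₀) (hκ : 0 < κ)
    (hν : 0 < ν) (hη : 0 ≤ η) :
    (∀ M : ℝ, 0 < M → 0 < EEmax β N₀ κ ν η M) ∧
    Filter.Tendsto (EEmax β N₀ κ ν η) (nhdsWithin 0 (Set.Ioi 0)) (nhds 0) ∧
    Filter.Tendsto (EEmax β N₀ κ ν η) Filter.atTop (nhds 0) ∧
    ∃ Mstar : ℝ, 0 < Mstar ∧
      ∀ M : ℝ, 0 < M → EEmax β N₀ κ ν η M ≤ EEmax β N₀ κ ν η Mstar := by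
  set c : ℝ := β / N₀ with hcdef
  have hc : 0 < c := div_pos hβ hN
  have hL : 0 < Real.log 2 := Real.log_pos one_lt_two
  have hEE : ∀ M : ℝ, EEmax β N₀ κ ν η M =
      sSup {y : ℝ | ∃ z : ℝ, 0 < z ∧ y = myF c κ ν η M z} := by
    intro M
    unfold EEmax myF
    congr 1
    ext y
    refine exists_congr fun z => and_congr_right fun _ => ?_
    have : M * β / N₀ * z = c * M * z := by rw [hcdef]; ring
    rw [this]
  set K1 : ℝ := c * κ / Real.log 2 with hK1
  have hK1pos : 0 < K1 := by positivity
  set K2 : ℝ := c / (ν * Real.log 2) with hK2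
  have hK2pos : 0 < K2 := by positivity
  set KM : ℝ := 4 * c ^ ((4:ℝ)⁻¹) / (Real.log 2 * (4/κ) ^ ((4:ℝ)⁻¹) * (4*ν/3) ^ ((3:ℝ)/4))
    with hKM
  have hKMpos : 0 < KM := by positivity
  set KZ : ℝ := 4 * c ^ ((4:ℝ)⁻¹) / (Real.log 2 * (4/(3*κ)) ^ ((3:ℝ)/4) * (4*ν) ^ ((4:ℝ)⁻¹))
    with hKZ
  have hKZpos : 0 < KZ := by positivity
  have hbdd : ∀ M : ℝ, 0 < M → BddAbove {y : ℝ | ∃ z : ℝ, 0 < z ∧ y = myF c κ ν η M z} := by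
    intro M hM
    exact ⟨K1 * M, by rintro y ⟨z, hz, rfl⟩; exact myF_le_linM hc hκ hν hη hM hz⟩
  have hEEle : ∀ M : ℝ, 0 < M → ∀ B : ℝ, (∀ z : ℝ, 0 < z → myF c κ ν η M z ≤ B) →
      EEmax β N₀ κ ν η M ≤ B := by
    intro M hM B hB
    rw [hEE]
    exact csSup_le ⟨_, 1, one_pos, rfl⟩ (by rintro y ⟨z, hz, rfl⟩; exact hB z hz)
  have hEEge : ∀ M : ℝ, 0 < M → ∀ z : ℝ, 0 < z →
      myF c κ ν η M z ≤ EEmax β N₀ κ ν η M := by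
    intro M hM z hz
    rw [hEE]
    exact le_csSup (hbdd M hM) ⟨z, hz, rfl⟩
  have hpos : ∀ M : ℝ, 0 < M → 0 < EEmax β N₀ κ ν η M := fun M hM =>
    (myF_pos hc hκ hν hη hM one_pos).trans_le (hEEge M hM 1 one_pos)
  refine ⟨hpos, ?_, ?_, ?_⟩
  · -- M → 0⁺
    apply squeeze_zero' (g := fun M => K1 * M)
    · filter_upwards [self_mem_nhdsWithin] with M hM
      exact (hpos M hM).le
    · filter_upwards [self_mem_nhdsWithin] with M hM
      exact hEEle M hM _ (fun z hz => myF_le_linM hc hκ hν hη hM hz)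
    · have h : Filter.Tendsto (fun M : ℝ => K1 * M) (nhds 0) (nhds 0) := by
        simpa using (Filter.tendsto_id.const_mul K1 :
          Filter.Tendsto (fun M : ℝ => K1 * id M) (nhds 0) (nhds (K1 * 0)))
      exact h.mono_left nhdsWithin_le_nhds
  · -- M → ∞
    apply squeeze_zero' (g := fun M => KM / Real.sqrt M)
    · filter_upwards [Filter.eventually_gt_atTop 0] with M hM
      exact (hpos M hM).le
    · filter_upwards [Filter.eventually_gt_atTop 0] with M hM
      exact hEEle M hM _ (fun z hz => myF_le_sqrtM hc hκ hν hη hM hz)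
    · apply Filter.Tendsto.div_atTop tendsto_const_nhds
      exact (tendsto_rpow_atTop (by norm_num : (0:ℝ) < 1/2)).congr
        (fun x => (Real.sqrt_eq_rpow x).symm)
  · -- Mstar
    set v₀ : ℝ := myF c κ ν η 1 1 with hv₀
    have hv₀pos : 0 < v₀ := myF_pos hc hκ hν hη one_pos one_pos
    set a : ℝ := min 1 (v₀ / K1) with ha'
    have ha : 0 < a := lt_min one_pos (by positivity)
    set a' : ℝ := min 1 (v₀ / K2) with ha''
    have ha'pos : 0 < a' := lt_min one_pos (by positivity)
    set b : ℝ := max 1 ((KM / v₀) ^ 2) with hb'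
    set b' : ℝ := max 1 ((KZ / v₀) ^ 2) with hb''
    set Kset : Set (ℝ × ℝ) := Set.Icc a b ×ˢ Set.Icc a' b' with hKset
    have h11 : ((1:ℝ), (1:ℝ)) ∈ Kset :=
      ⟨⟨min_le_left _ _, le_max_left _ _⟩, ⟨min_le_left _ _, le_max_left _ _⟩⟩
    have hKcomp : IsCompact Kset := isCompact_Icc.prod isCompact_Icc
    have hKpos : ∀ p ∈ Kset, 0 < p.1 ∧ 0 < p.2 := by
      rintro ⟨M, z⟩ ⟨⟨h1, _⟩, ⟨h2, _⟩⟩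
      exact ⟨lt_of_lt_of_le ha h1, lt_of_lt_of_le ha'pos h2⟩
    have hcont : ContinuousOn (fun p : ℝ × ℝ => myF c κ ν η p.1 p.2) Kset := by
      unfold myF
      have hlogb : ContinuousOn (fun p : ℝ × ℝ => Real.logb 2 (1 + c * p.1 * p.2)) Kset := by
        simp only [Real.logb]
        apply ContinuousOn.div_const
        apply ContinuousOn.log
        · fun_prop
        · intro p hp
          obtain ⟨h1, h2⟩ := hKpos p hp
          have : 0 < c * p.1 * p.2 := by positivity
          linarith
      apply ContinuousOn.div
      · exact hlogb
      · exact ((continuous_snd.div_const κ).continuousOn.add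
          (continuousOn_const.mul continuous_fst.continuousOn)).add
          (continuousOn_const.mul hlogb)
      · intro p hp
        obtain ⟨h1, h2⟩ := hKpos p hp
        have hx : 0 < c * p.1 * p.2 := by positivity
        have hg : 0 ≤ Real.logb 2 (1 + c * p.1 * p.2) :=
          Real.logb_nonneg one_lt_two (by linarith)
        have : 0 < p.2 / κ + ν * p.1 + η * Real.logb 2 (1 + c * p.1 * p.2) := by positivity
        exact this.ne'
    obtain ⟨p, hpK, hpmax⟩ := hKcomp.exists_isMaxOn ⟨_, h11⟩ hcont
    obtain ⟨hp1, hp2⟩ := hKpos p hpK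
    have hv₀le : v₀ ≤ myF c κ ν η p.1 p.2 := hpmax h11
    refine ⟨p.1, hp1, ?_⟩
    intro M hM
    refine le_trans (hEEle M hM (myF c κ ν η p.1 p.2) ?_) (hEEge p.1 hp1 p.2 hp2)
    intro z hz
    by_cases hMa : M ≤ a
    · have h1 : myF c κ ν η M z ≤ K1 * M := myF_le_linM hc hκ hν hη hM hz
      have h2 : K1 * M ≤ K1 * (v₀ / K1) :=
        mul_le_mul_of_nonneg_left (hMa.trans (min_le_right _ _)) hK1pos.le
      have h3 : K1 * (v₀ / K1) = v₀ := by field_simp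
      linarith
    by_cases hMb : b ≤ M
    · have h1 : myF c κ ν η M z ≤ KM / Real.sqrt M := myF_le_sqrtM hc hκ hν hη hM hz
      have hsM : KM / v₀ ≤ Real.sqrt M := by
        have := Real.sqrt_le_sqrt ((le_max_right 1 ((KM / v₀) ^ 2)).trans hMb)
        rwa [Real.sqrt_sq (by positivity)] at this
      have h2 : KM / Real.sqrt M ≤ v₀ := by
        rw [div_le_iff₀ (Real.sqrt_pos.mpr hM)]
        calc KM = v₀ * (KM / v₀) := by field_simp
          _ ≤ v₀ * Real.sqrt M := mul_le_mul_of_nonneg_left hsM hv₀pos.le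
      linarith
    by_cases hza : z ≤ a'
    · have h1 : myF c κ ν η M z ≤ K2 * z := myF_le_linZ hc hκ hν hη hM hz
      have h2 : K2 * z ≤ K2 * (v₀ / K2) :=
        mul_le_mul_of_nonneg_left (hza.trans (min_le_right _ _)) hK2pos.le
      have h3 : K2 * (v₀ / K2) = v₀ := by field_simp
      linarith
    by_cases hzb : b' ≤ z
    · have h1 : myF c κ ν η M z ≤ KZ / Real.sqrt z := myF_le_sqrtZ hc hκ hν hη hM hz
      have hsZ : KZ / v₀ ≤ Real.sqrt z := by
        have := Real.sqrt_le_sqrt ((le_max_right 1 ((KZ / v₀) ^ 2)).trans hzb)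
        rwa [Real.sqrt_sq (by positivity)] at this
      have h2 : KZ / Real.sqrt z ≤ v₀ := by
        rw [div_le_iff₀ (Real.sqrt_pos.mpr hz)]
        calc KZ = v₀ * (KZ / v₀) := by field_simp
          _ ≤ v₀ * Real.sqrt z := mul_le_mul_of_nonneg_left hsZ hv₀pos.le
      linarith
    · have hmem : (M, z) ∈ Kset :=
        Set.mk_mem_prod ⟨(lt_of_not_ge hMa).le, (lt_of_not_ge hMb).le⟩
          ⟨(lt_of_not_ge hza).le, (lt_of_not_ge hzb).le⟩
      exact hpmax hmem
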